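/- For a zero-dimensional topological space X, the mildly Menger game G_fin(C_O, C_O) is equivalent to the Menger game G_fin(O, O): player ONE has a winning strategy in G_fin(C_O, C_O) on X if and only if ONE has a winning strategy in G_fin(O, O) on X, and player TWO has a winning strategy in G_fin(C_O, C_O) on X if and only if TWO has a winning strategy in G_fin(O, O) on X. -/
import Mathlib


/-- `X` is zero-dimensional: it is nonempty and has a base consisting of clopen sets. -/
def ZeroDim (X : Type*) [TopologicalSpace X] : Prop :=
  Nonempty X ∧ ∀ (x : X) (U : Set X), IsOpen U → x ∈ U →
    ∃ C : Set X, IsClopen C ∧ x ∈ C ∧ C ⊆ U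

/-- `𝒰` is a cover of `X` consisting of sets satisfying `P`
(e.g. an open cover for `P = IsOpen`, a clopen cover for `P = IsClopen`). -/
def IsCover {X : Type*} (P : Set X → Prop) (𝒰 : Set (Set X)) : Prop :=
  (∀ U ∈ 𝒰, P U) ∧ ⋃₀ 𝒰 = Set.univ

/-- The selection principle `S_fin(P-covers, P-covers)`: for every sequence of
`P`-covers `u n` there are finite subsets `v n ⊆ u n` whose union is a cover. -/
def SelFin {X : Type*} (P : Set X → Prop) : Prop :=
  ∀ u : ℕ → Set (Set X), (∀ n, IsCover P (u n)) →
    ∃ v : ℕ → Set (Set X), (∀ n, (v n).Finite ∧ v n ⊆ u n) ∧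
      (⋃ n, ⋃₀ v n) = Set.univ

/-- Player ONE has a winning strategy in the selection game `G_fin(P-covers, P-covers)`:
a strategy `σ`, depending on TWO's previous moves, always playing `P`-covers, such that for
every sequence of legal responses by TWO (finite subsets of the cover just played),
the union of TWO's choices fails to cover. -/
def ONEWinsSel {X : Type*} (P : Set X → Prop) : Prop :=
  ∃ σ : List (Set (Set X)) → Set (Set X),
    (∀ h, IsCover P (σ h)) ∧
    ∀ v : ℕ → Set (Set X),
      (∀ n, (v n).Finite ∧ v n ⊆ σ (List.ofFn fun i : Fin n => v i)) →
      (⋃ n, ⋃₀ v n) ≠ Set.univ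

/-- Player TWO has a winning strategy in the selection game `G_fin(P-covers, P-covers)`:
a strategy `τ`, depending on ONE's moves so far, such that against every sequence of
`P`-covers played by ONE, TWO's responses are legal (finite subsets of the corresponding
cover) and their union is a cover. -/
def TWOWinsSel {X : Type*} (P : Set X → Prop) : Prop :=
  ∃ τ : List (Set (Set X)) → Set (Set X),
    ∀ u : ℕ → Set (Set X), (∀ n, IsCover P (u n)) →
      (∀ n, (τ (List.ofFn fun i : Fin (n + 1) => u i)).Finite ∧
        τ (List.ofFn fun i : Fin (n + 1) => u i) ⊆ u n) ∧
      (⋃ n, ⋃₀ τ (List.ofFn fun i : Fin (n + 1) => u i)) = Set.univ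

/-- Player ONE has a winning strategy in the `Q`-`R` game (in round `n`, ONE picks a set
`K n` with `Q (K n)` and TWO responds with a set `U n` with `R (U n)` and `K n ⊆ U n`;
ONE wins if `⋃ n, U n = univ`).  E.g. `Q = IsCompact`, `R = IsClopen` is the
compact-clopen game; `R = IsOpen` gives the compact-open game. -/
def ONEWinsCC {X : Type*} (Q R : Set X → Prop) : Prop :=
  ∃ σ : List (Set X) → Set X,
    (∀ h, Q (σ h)) ∧
    ∀ v : ℕ → Set X,
      (∀ n, R (v n) ∧ σ (List.ofFn fun i : Fin n => v i) ⊆ v n) →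
      (⋃ n, v n) = Set.univ

/-- Player TWO has a winning strategy in the `Q`-`R` game: a strategy `τ`, depending on
ONE's moves so far, such that against every sequence of sets satisfying `Q` played by ONE,
TWO's responses satisfy `R`, contain ONE's corresponding sets, and fail to cover `X`. -/
def TWOWinsCC {X : Type*} (Q R : Set X → Prop) : Prop :=
  ∃ τ : List (Set X) → Set X,
    ∀ u : ℕ → Set X, (∀ n, Q (u n)) →
      (∀ n, R (τ (List.ofFn fun i : Fin (n + 1) => u i)) ∧
        u n ⊆ τ (List.ofFn fun i : Fin (n + 1) => u i)) ∧
      (⋃ n, τ (List.ofFn fun i : Fin (n + 1) => u i)) ≠ Set.univ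

/-- A subset `K` of `X` is mildly compact if every cover of `K` by clopen subsets
of `X` contains a finite subcover. -/
def MildlyCompact {X : Type*} [TopologicalSpace X] (K : Set X) : Prop :=
  ∀ 𝒰 : Set (Set X), (∀ U ∈ 𝒰, IsClopen U) → K ⊆ ⋃₀ 𝒰 →
    ∃ 𝒱 ⊆ 𝒰, 𝒱.Finite ∧ K ⊆ ⋃₀ 𝒱

/-- The quasi-component of a subset `K` of `X`: the intersection of all clopen
subsets of `X` containing `K`. -/
def QuasiComp {X : Type*} [TopologicalSpace X] (K : Set X) : Set X :=
  ⋂₀ {C : Set X | IsClopen C ∧ K ⊆ C}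

section Aux

open Set

variable {X : Type*} [TopologicalSpace X]

/-- Clopen refinement of a cover. -/
def refineCl (u : Set (Set X)) : Set (Set X) :=
  {C | IsClopen C ∧ ∃ U ∈ u, C ⊆ U}

lemma isCover_refineCl (hX : ZeroDim X) {u : Set (Set X)} (hu : IsCover IsOpen u) :
    IsCover IsClopen (refineCl u) := by
  constructor
  · exact fun C hC => hC.1
  · apply Set.eq_univ_of_forall
    intro x
    have hx : x ∈ ⋃₀ u := hu.2 ▸ Set.mem_univ x
    obtain ⟨U, hUu, hxU⟩ := hx
    obtain ⟨C, hC, hxC, hCU⟩ := hX.2 x U (hu.1 U hUu) hxU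
    exact ⟨C, ⟨hC, U, hUu, hCU⟩, hxC⟩

open Classical in
/-- Pick a member of `u` containing `C`, if one exists. -/
noncomputable def pickSup (u : Set (Set X)) (C : Set X) : Set X :=
  if h : ∃ U ∈ u, C ⊆ U then h.choose else Set.univ

lemma pickSup_spec {u : Set (Set X)} {C : Set X} (h : ∃ U ∈ u, C ⊆ U) :
    pickSup u C ∈ u ∧ C ⊆ pickSup u C := by
  rw [pickSup, dif_pos h]
  exact ⟨h.choose_spec.1, h.choose_spec.2⟩

lemma isCover_open_of_clopen {u : Set (Set X)} (hu : IsCover IsClopen u) :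
    IsCover IsOpen u :=
  ⟨fun U hU => (hu.1 U hU).2, hu.2⟩

/-- Translate a history of TWO's moves in the clopen game into the simulated
open-game history, given ONE's open-game strategy `σ`. -/
def trHist (σ : List (Set (Set X)) → Set (Set X)) :
    List (Set (Set X)) → List (Set (Set X)) → List (Set (Set X))
  | acc, [] => acc
  | acc, a :: l => trHist σ (acc ++ [pickSup (σ acc) '' a]) l

lemma trHist_append (σ : List (Set (Set X)) → Set (Set X))
    (l : List (Set (Set X))) (a : Set (Set X)) :
    ∀ acc, trHist σ acc (l ++ [a]) =
      trHist σ acc l ++ [pickSup (σ (trHist σ acc l)) '' a] := by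
  induction l with
  | nil => intro acc; rfl
  | cons b l ih =>
      intro acc
      simp only [List.cons_append, trHist]
      exact ih _

/-- The simulated open-game moves of TWO. -/
noncomputable def simW (σ : List (Set (Set X)) → Set (Set X))
    (v : ℕ → Set (Set X)) (n : ℕ) : Set (Set X) :=
  pickSup (σ (trHist σ [] (List.ofFn fun i : Fin n => v i))) '' v n

end Aux

/-- For a zero-dimensional space, the mildly Menger game `G_fin(C_O, C_O)` is equivalent
to the Menger game `G_fin(O, O)`: ONE has a winning strategy in one iff in the other,
and likewise for TWO. -/
theorem stmt1 {X : Type*} [TopologicalSpace X] (hX : ZeroDim X) :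
    (ONEWinsSel (X := X) IsClopen ↔ ONEWinsSel (X := X) IsOpen) ∧
    (TWOWinsSel (X := X) IsClopen ↔ TWOWinsSel (X := X) IsOpen) := by
  constructor
  · constructor
    · -- ONE clopen → ONE open : clopen covers are open covers
      rintro ⟨σ, hσ, hwin⟩
      exact ⟨σ, fun h => isCover_open_of_clopen (hσ h), hwin⟩
    · -- ONE open → ONE clopen : simulate via clopen refinements
      rintro ⟨σ, hσ, hwin⟩
      refine ⟨fun h => refineCl (σ (trHist σ [] h)),
        fun h => isCover_refineCl hX (hσ _), ?_⟩
      intro v hv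
      have key : ∀ n, trHist σ [] (List.ofFn fun i : Fin n => v i)
          = List.ofFn fun i : Fin n => simW σ v i := by
        intro n
        induction n with
        | zero => rfl
        | succ n ih =>
            rw [List.ofFn_succ' (f := fun i : Fin (n+1) => v i), List.concat_eq_append,
              trHist_append]
            have hcast : (List.ofFn fun i : Fin n => v i.castSucc)
                = List.ofFn fun i : Fin n => v i := by
              simp [Fin.coe_castSucc]
            rw [hcast, ih]
            rw [List.ofFn_succ' (f := fun i : Fin (n+1) => simW σ v i),
              List.concat_eq_append]
            have hcast' : (List.ofFn fun i : Fin n => simW σ v i.castSucc)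
                = List.ofFn fun i : Fin n => simW σ v i := by
              simp [Fin.coe_castSucc]
            rw [hcast']
            simp only [Fin.val_last, simW, ih]
      have hwleg : ∀ n, (simW σ v n).Finite ∧ simW σ v n ⊆ σ (List.ofFn fun i : Fin n => simW σ v i) := by
        intro n
        obtain ⟨hf, hsub⟩ := hv n
        refine ⟨hf.image _, ?_⟩
        rintro _ ⟨C, hC, rfl⟩
        have hC' := hsub hC
        rw [← key n]
        exact (pickSup_spec hC'.2).1
      have hne := hwin (simW σ v) hwleg
      intro hcontra
      apply hne
      apply Set.eq_univ_of_univ_subset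
      rw [← hcontra]
      refine Set.iUnion_mono fun n => ?_
      intro x hx
      obtain ⟨C, hC, hxC⟩ := hx
      exact ⟨pickSup (σ (trHist σ [] (List.ofFn fun i : Fin n => v i))) C,
        Set.mem_image_of_mem _ hC, (pickSup_spec ((hv n).2 hC).2).2 hxC⟩
  · constructor
    · -- TWO clopen → TWO open : refine ONE's open covers to clopen covers
      rintro ⟨τ, hτ⟩
      refine ⟨fun h => pickSup (h.getLastD ∅) '' τ (h.map refineCl), ?_⟩
      intro u hu
      have hru : ∀ n, IsCover IsClopen (refineCl (u n)) :=
        fun n => isCover_refineCl hX (hu n)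
      obtain ⟨hleg, hcov⟩ := hτ (fun n => refineCl (u n)) hru
      have hmap : ∀ n : ℕ, ((List.ofFn fun i : Fin (n+1) => u i).map refineCl)
          = List.ofFn fun i : Fin (n+1) => refineCl (u i) := by
        intro n; rw [List.map_ofFn]; rfl
      have hlast : ∀ n : ℕ, (List.ofFn fun i : Fin (n+1) => u i).getLastD ∅ = u n := by
        intro n
        rw [List.ofFn_succ' (f := fun i : Fin (n+1) => u i), List.concat_eq_append,
          List.getLastD_concat, Fin.val_last]
      constructor
      · intro n
        simp only [hmap, hlast]
        obtain ⟨hf, hsub⟩ := hleg n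
        refine ⟨hf.image _, ?_⟩
        rintro _ ⟨C, hC, rfl⟩
        exact (pickSup_spec (hsub hC).2).1
      · apply Set.eq_univ_of_univ_subset
        rw [← hcov]
        refine Set.iUnion_mono fun n => ?_
        simp only [hmap, hlast]
        obtain ⟨hf, hsub⟩ := hleg n
        intro x hx
        obtain ⟨C, hC, hxC⟩ := hx
        exact ⟨pickSup (u n) C, Set.mem_image_of_mem _ hC,
          (pickSup_spec (hsub hC).2).2 hxC⟩
    · -- TWO open → TWO clopen : clopen covers are open covers
      rintro ⟨τ, hτ⟩
      exact ⟨τ, fun u hu => hτ u fun n => isCover_open_of_clopen (hu n)⟩
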